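/- Let L ≥ 1, let n₀ = n, n₁, …, n_{L−1} be positive layer dimensions with scalar output. Let φ : ℝ → ℝ be convex on all of ℝ and monotone (nondecreasing). For l = 1, …, L−1 let W^l be an n_l × n_{l−1} real matrix all of whose entries are nonnegative, V^l an n_l × n real matrix, ω^l ∈ ℝ^{n_l}; let w^L ∈ ℝ^{n_{L−1}} have nonnegative entries, v^L ∈ ℝ^n, ω^L ∈ ℝ, and let U be an n × n real matrix. Define z⁰(x) = x, z^l(x) = φ applied componentwise to (W^l · z^{l−1}(x) + V^l · x + ω^l) for l = 1, …, L−1, and the quadratic-augmented output y(x) = (U · x) ⬝ (U · x) + w^L ⬝ z^{L−1}(x) + v^L ⬝ x + ω^L, where ⬝ denotes the Euclidean dot product on ℝ^n, so that the quadratic term equals xᵀ (Uᵀ U) x. Then y is convex on all of ℝ^n. -/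

import Mathlib

open Matrix

lemma convexOn_linear {n : ℕ} (v : Fin n → ℝ) :
    ConvexOn ℝ Set.univ (fun x : Fin n → ℝ => ∑ j, v j * x j) := by
  refine ⟨convex_univ, fun x _ y _ a b _ _ _ => le_of_eq ?_⟩
  simp only [Pi.add_apply, Pi.smul_apply, smul_eq_mul]
  rw [Finset.mul_sum, Finset.mul_sum, ← Finset.sum_add_distrib]
  exact Finset.sum_congr rfl fun j _ => by ring

lemma convexOn_sum' {E : Type*} [AddCommMonoid E] [Module ℝ E] {ι : Type*} (t : Finset ι)
    (f : ι → E → ℝ) (hf : ∀ i ∈ t, ConvexOn ℝ Set.univ (f i)) :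
    ConvexOn ℝ Set.univ (fun x => ∑ i ∈ t, f i x) := by
  classical
  induction t using Finset.induction with
  | empty => simpa using convexOn_const 0 convex_univ
  | insert _ _ hni ih =>
    rename_i a s
    simp only [Finset.sum_insert hni]
    exact (hf a (by simp)).add (ih fun i hi => hf i (Finset.mem_insert_of_mem hi))

/-- The scalar output of an input-convex neural network augmented with a
convex quadratic term `xᵀ (Uᵀ U) x = (U x) ⬝ (U x)`:
`z⁰ = x`, `z^l = φ(W^l z^{l−1} + V^l x + ω^l)` (`l = 1, …, L−1`),
`y(x) = (U x) ⬝ (U x) + w^L ⬝ z^{L−1}(x) + v^L ⬝ x + ω^L`,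
with convex nondecreasing activation `φ`, elementwise nonnegative inner
weight matrices `W^l`, and nonnegative output weight vector `w^L`,
is convex in the input `x`.
Here `dims l` is the width `n_l` of layer `l` (`dims 0 = n`),
and `W l`, `V l`, `ω l` are the data of layer `l + 1`. -/
theorem icnn_quadratic_output_convex
    (L : ℕ) (hL : 1 ≤ L)
    (dims : ℕ → ℕ) (hdims : ∀ l, l ≤ L - 1 → 0 < dims l)
    (φ : ℝ → ℝ) (hφ_convex : ConvexOn ℝ Set.univ φ) (hφ_mono : Monotone φ)
    (W : (l : ℕ) → Matrix (Fin (dims (l + 1))) (Fin (dims l)) ℝ)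
    (hW : ∀ l, l + 1 ≤ L - 1 → ∀ i j, 0 ≤ W l i j)
    (V : (l : ℕ) → Matrix (Fin (dims (l + 1))) (Fin (dims 0)) ℝ)
    (ω : (l : ℕ) → Fin (dims (l + 1)) → ℝ)
    (z : (l : ℕ) → (Fin (dims 0) → ℝ) → (Fin (dims l) → ℝ))
    (hz0 : ∀ x, z 0 x = x)
    (hzrec : ∀ l, l + 1 ≤ L - 1 → ∀ x,
      z (l + 1) x = fun i => φ (((W l).mulVec (z l x) + (V l).mulVec x + ω l) i))
    (wL : Fin (dims (L - 1)) → ℝ) (hwL : ∀ j, 0 ≤ wL j)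
    (vL : Fin (dims 0) → ℝ) (ωL : ℝ)
    (U : Matrix (Fin (dims 0)) (Fin (dims 0)) ℝ)
    (y : (Fin (dims 0) → ℝ) → ℝ)
    (hy : ∀ x, y x =
      (U.mulVec x) ⬝ᵥ (U.mulVec x) + wL ⬝ᵥ (z (L - 1) x) + vL ⬝ᵥ x + ωL) :
    ConvexOn ℝ Set.univ y := by
  -- composition with a convex monotone scalar function
  have comp : ∀ g : (Fin (dims 0) → ℝ) → ℝ, ConvexOn ℝ Set.univ g →
      ConvexOn ℝ Set.univ (fun x => φ (g x)) := by
    intro g hg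
    refine ⟨convex_univ, fun x _ y _ a b ha hb hab => ?_⟩
    calc φ (g (a • x + b • y)) ≤ φ (a • g x + b • g y) :=
          hφ_mono (hg.2 (Set.mem_univ x) (Set.mem_univ y) ha hb hab)
      _ ≤ a • φ (g x) + b • φ (g y) :=
          hφ_convex.2 (Set.mem_univ _) (Set.mem_univ _) ha hb hab
  -- linear functions are convex
  have lin : ∀ {m : ℕ} (A : Matrix (Fin m) (Fin (dims 0)) ℝ) (i : Fin m),
      ConvexOn ℝ Set.univ (fun x => A.mulVec x i) :=
    fun A i => ((LinearMap.proj i).comp A.mulVecLin).convexOn convex_univ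
  -- each component of each layer is convex
  have hz : ∀ l, l ≤ L - 1 → ∀ i, ConvexOn ℝ Set.univ (fun x => z l x i) := by
    intro l
    induction l with
    | zero =>
      intro _ i
      simp only [hz0]
      exact (LinearMap.proj (R := ℝ) (φ := fun _ : Fin (dims 0) => ℝ) i).convexOn convex_univ
    | succ l ih =>
      intro hl i
      have hl' : l ≤ L - 1 := le_of_lt (Nat.lt_of_succ_le hl)
      have hrec := hzrec l hl
      have : (fun x => z (l + 1) x i) =
          fun x => φ ((∑ j, W l i j * z l x j) + ((V l).mulVec x i + ω l i)) := by
        funext x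
        rw [hrec x]
        simp [Matrix.mulVec, dotProduct, add_assoc]
      rw [this]
      refine comp _ (ConvexOn.add ?_ ?_)
      · exact convexOn_sum' _ _ (fun j _ => (ih hl' j).smul (hW l hl i j))
      · exact (lin (V l) i).add (convexOn_const _ convex_univ)
  -- assemble the output
  have hyfun : y = fun x => (∑ i, (U.mulVec x i) ^ 2) +
      ((∑ j, wL j * z (L - 1) x j) + ((∑ j, vL j * x j) + ωL)) := by
    funext x
    rw [hy x]
    simp [dotProduct, sq]
    ring
  rw [hyfun]
  refine ConvexOn.add ?_ (ConvexOn.add ?_ (ConvexOn.add ?_ (convexOn_const _ convex_univ)))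
  · refine convexOn_sum' _ _ (fun i _ => ?_)
    have hsq : ConvexOn ℝ Set.univ (fun t : ℝ => t ^ 2) := Even.convexOn_pow even_two
    have := hsq.comp_affineMap
      (((LinearMap.proj i).comp U.mulVecLin).toAffineMap)
    exact this
  · exact convexOn_sum' _ _ (fun j _ => (hz (L - 1) le_rfl j).smul (hwL j))
  · exact convexOn_linear vL
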